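/- Let p be a prime, n = p^a, q = p^n, and r a Zsigmondy prime for (p, n). In the group G = JRV ≤ AΓL_1(q), where V ≅ F_q^+ is the translation subgroup, R ≤ F_q^* is the subgroup of order r acting by multiplication, and J ≅ Aut(F_q) is cyclic of order n, the following hold: C_V(R) = 1, N_G(R) = JR, and C_G(R) = R. -/

import Mathlib

/-- The translation subgroup `V ≅ F_q⁺` of `Sym(F_q)`. -/
def transSubgroup (p n : ℕ) [Fact p.Prime] :
    Subgroup (Equiv.Perm (GaloisField p n)) :=
  Subgroup.closure (Set.range fun b : GaloisField p n => Equiv.addLeft b)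

/-- The subgroup `R` of order `r` of multiplications, i.e. the multiplications
by `r`-th roots of unity in `F_q*`. -/
def mulSubgroup (p n r : ℕ) [Fact p.Prime] :
    Subgroup (Equiv.Perm (GaloisField p n)) :=
  Subgroup.closure
    {σ | ∃ (a : GaloisField p n) (ha : a ≠ 0), a ^ r = 1 ∧ σ = Equiv.mulLeft₀ a ha}

/-- The subgroup `J ≅ Aut(F_q)` of field automorphisms inside `Sym(F_q)`. -/
def galSubgroup (p n : ℕ) [Fact p.Prime] :
    Subgroup (Equiv.Perm (GaloisField p n)) :=
  Subgroup.closure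
    {σ | ∃ τ : GaloisField p n ≃+* GaloisField p n, σ = (τ : GaloisField p n ≃ GaloisField p n)}



variable {K : Type*} [Field K]

open Equiv

/-- translations as a subgroup -/
def transSub (K : Type*) [Field K] : Subgroup (Equiv.Perm K) where
  carrier := Set.range fun b : K => Equiv.addLeft b
  one_mem' := ⟨0, by ext x; simp⟩
  mul_mem' := by
    rintro _ _ ⟨b, rfl⟩ ⟨c, rfl⟩
    exact ⟨b + c, by ext x; simp [Equiv.Perm.mul_apply, add_assoc]⟩
  inv_mem' := by
    rintro _ ⟨b, rfl⟩
    exact ⟨-b, by ext x; simp [Equiv.Perm.inv_def]⟩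

def mulSub (K : Type*) [Field K] (r : ℕ) : Subgroup (Equiv.Perm K) where
  carrier := {σ | ∃ (a : K) (ha : a ≠ 0), a ^ r = 1 ∧ σ = Equiv.mulLeft₀ a ha}
  one_mem' := ⟨1, one_ne_zero, one_pow r, by ext x; simp⟩
  mul_mem' := by
    rintro _ _ ⟨a, ha, har, rfl⟩ ⟨b, hb, hbr, rfl⟩
    exact ⟨a * b, mul_ne_zero ha hb, by rw [mul_pow, har, hbr, one_mul],
      by ext x; simp [Equiv.Perm.mul_apply, mul_assoc]⟩
  inv_mem' := by
    rintro _ ⟨a, ha, har, rfl⟩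
    refine ⟨a⁻¹, inv_ne_zero ha, by rw [inv_pow, har, inv_one], ?_⟩
    have : Equiv.mulLeft₀ a⁻¹ (inv_ne_zero ha) * Equiv.mulLeft₀ a ha = 1 := by
      ext x; simp [Equiv.Perm.mul_apply, ha]
    exact (eq_inv_of_mul_eq_one_left this).symm

def galSub (K : Type*) [Field K] : Subgroup (Equiv.Perm K) where
  carrier := {σ | ∃ τ : K ≃+* K, σ = (τ : K ≃ K)}
  one_mem' := ⟨RingEquiv.refl K, by ext x; simp⟩
  mul_mem' := by
    rintro _ _ ⟨τ, rfl⟩ ⟨σ, rfl⟩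
    exact ⟨σ.trans τ, by ext x; simp [Equiv.Perm.mul_apply]⟩
  inv_mem' := by
    rintro _ ⟨τ, rfl⟩
    exact ⟨τ.symm, by ext x; simp [Equiv.Perm.inv_def]⟩

/-- maps `x ↦ τ (a * x)` with `a^r = 1`. -/
def jrSub (K : Type*) [Field K] (r : ℕ) : Subgroup (Equiv.Perm K) where
  carrier := {σ | ∃ (τ : K ≃+* K) (a : K), a ≠ 0 ∧ a ^ r = 1 ∧ ∀ x, σ x = τ (a * x)}
  one_mem' := ⟨RingEquiv.refl K, 1, one_ne_zero, one_pow r, fun x => by simp⟩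
  mul_mem' := by
    rintro σ₁ σ₂ ⟨τ₁, a₁, ha₁, ha₁r, h₁⟩ ⟨τ₂, a₂, ha₂, ha₂r, h₂⟩
    have hs : τ₂.symm a₁ ≠ 0 := fun h => ha₁ (by simpa using congrArg τ₂ h)
    refine ⟨τ₂.trans τ₁, τ₂.symm a₁ * a₂, mul_ne_zero hs ha₂, ?_, fun x => ?_⟩
    · rw [mul_pow, ← map_pow, ha₁r, ha₂r, map_one, one_mul]
    · rw [Equiv.Perm.mul_apply, h₂, h₁]
      simp [map_mul, mul_assoc]
  inv_mem' := by
    rintro σ ⟨τ, a, ha, har, h⟩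
    have hs : τ a⁻¹ ≠ 0 := fun hh => (inv_ne_zero ha) (by simpa using hh)
    refine ⟨τ.symm, τ a⁻¹, hs, by rw [← map_pow, inv_pow, har, inv_one, map_one], fun y => ?_⟩
    have key : σ (τ.symm (τ a⁻¹ * y)) = y := by
      rw [h]; simp [map_mul, ← mul_assoc, ha]
    calc σ⁻¹ y = σ⁻¹ (σ (τ.symm (τ a⁻¹ * y))) := by rw [key]
    _ = τ.symm (τ a⁻¹ * y) := σ.symm_apply_apply _

/-- maps `x ↦ τ (a * x) + b` with `a^r = 1`. -/
def affSub (K : Type*) [Field K] (r : ℕ) : Subgroup (Equiv.Perm K) where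
  carrier := {σ | ∃ (τ : K ≃+* K) (a b : K), a ≠ 0 ∧ a ^ r = 1 ∧ ∀ x, σ x = τ (a * x) + b}
  one_mem' := ⟨RingEquiv.refl K, 1, 0, one_ne_zero, one_pow r, fun x => by simp⟩
  mul_mem' := by
    rintro σ₁ σ₂ ⟨τ₁, a₁, b₁, ha₁, ha₁r, h₁⟩ ⟨τ₂, a₂, b₂, ha₂, ha₂r, h₂⟩
    have hs : τ₂.symm a₁ ≠ 0 := fun h => ha₁ (by simpa using congrArg τ₂ h)
    refine ⟨τ₂.trans τ₁, τ₂.symm a₁ * a₂, τ₁ (a₁ * b₂) + b₁, mul_ne_zero hs ha₂, ?_, fun x => ?_⟩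
    · rw [mul_pow, ← map_pow, ha₁r, ha₂r, map_one, one_mul]
    · rw [Equiv.Perm.mul_apply, h₂, h₁]
      simp [map_mul, map_add, mul_add, mul_assoc, add_assoc]
  inv_mem' := by
    rintro σ ⟨τ, a, b, ha, har, h⟩
    have hs : τ a⁻¹ ≠ 0 := fun hh => (inv_ne_zero ha) (by simpa using hh)
    refine ⟨τ.symm, τ a⁻¹, -(a⁻¹ * τ.symm b), hs,
      by rw [← map_pow, inv_pow, har, inv_one, map_one], fun y => ?_⟩
    have key : σ (τ.symm (τ a⁻¹ * y) + -(a⁻¹ * τ.symm b)) = y := by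
      rw [h]
      rw [mul_add, map_add, map_mul]
      simp [map_mul, ← mul_assoc, ha, mul_comm]
    calc σ⁻¹ y = σ⁻¹ (σ (τ.symm (τ a⁻¹ * y) + -(a⁻¹ * τ.symm b))) := by rw [key]
    _ = _ := σ.symm_apply_apply _

variable (r : ℕ)

theorem gal_sup_mul (K : Type*) [Field K] (r : ℕ) : galSub K ⊔ mulSub K r = jrSub K r := by
  apply le_antisymm
  · apply sup_le
    · rintro _ ⟨τ, rfl⟩
      exact ⟨τ, 1, one_ne_zero, one_pow r, fun x => by simp⟩
    · rintro _ ⟨a, ha, har, rfl⟩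
      exact ⟨RingEquiv.refl K, a, ha, har, fun x => by simp⟩
  · rintro σ ⟨τ, a, ha, har, h⟩
    have : σ = (τ : Equiv.Perm K) * Equiv.mulLeft₀ a ha := by
      ext x; simp [Equiv.Perm.mul_apply, h x]
    rw [this]
    exact Subgroup.mul_mem _ (Subgroup.mem_sup_left ⟨τ, rfl⟩)
      (Subgroup.mem_sup_right ⟨a, ha, har, rfl⟩)

theorem gal_sup_mul_sup_trans (K : Type*) [Field K] (r : ℕ) :
    galSub K ⊔ mulSub K r ⊔ transSub K = affSub K r := by
  apply le_antisymm
  · apply sup_le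
    · rw [gal_sup_mul]
      rintro σ ⟨τ, a, ha, har, h⟩
      exact ⟨τ, a, 0, ha, har, fun x => by simp [h x]⟩
    · rintro _ ⟨b, rfl⟩
      exact ⟨RingEquiv.refl K, 1, b, one_ne_zero, one_pow r, fun x => by simp [add_comm]⟩
  · rintro σ ⟨τ, a, b, ha, har, h⟩
    have : σ = Equiv.addLeft b * ((τ : Equiv.Perm K) * Equiv.mulLeft₀ a ha) := by
      ext x; simp [Equiv.Perm.mul_apply, h x, add_comm]
    rw [this]
    refine Subgroup.mul_mem _ (Subgroup.mem_sup_right ⟨b, rfl⟩)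
      (Subgroup.mem_sup_left ?_)
    rw [gal_sup_mul]
    exact ⟨τ, a, ha, har, fun x => by simp [Equiv.Perm.mul_apply]⟩

theorem conj_mem_mulSub {K : Type*} [Field K] {r : ℕ} {σ h : Equiv.Perm K}
    (hσ : σ ∈ jrSub K r) (hh : h ∈ mulSub K r) : σ * h * σ⁻¹ ∈ mulSub K r := by
  obtain ⟨τ, a, ha, har, hform⟩ := hσ
  obtain ⟨e, he, her, rfl⟩ := hh
  have hτe : τ e ≠ 0 := fun hh' => he (by simpa using hh')
  refine ⟨τ e, hτe, by rw [← map_pow, her, map_one], ?_⟩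
  ext x
  simp only [Equiv.Perm.mul_apply, Equiv.mulLeft₀_apply]
  rw [hform, show a * (e * σ⁻¹ x) = e * (a * σ⁻¹ x) by ring, map_mul, ← hform,
    Equiv.Perm.inv_def, Equiv.apply_symm_apply]

theorem tau_eq_id {p a n r : ℕ} [Fact p.Prime] (ha : 0 < a) (hn : n = p ^ a)
    (hr : r.Prime) (hzsig : ∀ j : ℕ, 1 ≤ j → j < n → ¬ r ∣ p ^ j - 1)
    (τ : GaloisField p n ≃+* GaloisField p n) (u : (GaloisField p n)ˣ)
    (hu : orderOf u = r) (hfix : τ ↑u = ↑u) : ∀ x, τ x = x := by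
  classical
  have hn0 : n ≠ 0 := by rw [hn]; exact pow_ne_zero a (Nat.Prime.pos Fact.out).ne'
  letI : Fintype (GaloisField p n) := Fintype.ofFinite _
  have hcardK : Fintype.card (GaloisField p n) = p ^ n := by
    rw [← Nat.card_eq_fintype_card, GaloisField.card p n hn0]
  let F : Subfield (GaloisField p n) :=
    { carrier := {x | τ x = x}
      mul_mem' := by intro x y hx hy; simp only [Set.mem_setOf_eq, map_mul] at *; rw [hx, hy]
      one_mem' := by simp
      add_mem' := by intro x y hx hy; simp only [Set.mem_setOf_eq, map_add] at *; rw [hx, hy]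
      zero_mem' := by simp
      neg_mem' := by intro x hx; simp only [Set.mem_setOf_eq, map_neg] at *; rw [hx]
      inv_mem' := by intro x hx; simp only [Set.mem_setOf_eq, map_inv₀] at *; rw [hx] }
  letI : Fintype F := Fintype.ofFinite F
  haveI : CharP F p := F.subtype.charP Subtype.val_injective p
  obtain ⟨j, hpj, hcardF⟩ := FiniteField.card F p
  have hcF : (↑u : GaloisField p n) ∈ F := hfix
  have hune : ((⟨↑u, hcF⟩ : F)) ≠ 0 := by
    intro h; exact u.ne_zero (congrArg Subtype.val h)
  have hpow : (⟨(↑u : GaloisField p n), hcF⟩ : F) ^ (p ^ (j : ℕ) - 1) = 1 := by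
    rw [← hcardF]; exact FiniteField.pow_card_sub_one_eq_one _ hune
  have hpowK : (↑u : GaloisField p n) ^ (p ^ (j : ℕ) - 1) = 1 := by
    simpa using congrArg Subtype.val hpow
  have hdvd : r ∣ p ^ (j : ℕ) - 1 := by
    rw [← hu]
    exact orderOf_dvd_of_pow_eq_one (Units.ext (by simpa using hpowK))
  have hjn : ¬ (j : ℕ) < n := fun hlt => hzsig j j.pos hlt hdvd
  have hle : Fintype.card F ≤ Fintype.card (GaloisField p n) :=
    Fintype.card_le_of_injective _ Subtype.val_injective
  have hjle : (j : ℕ) ≤ n := by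
    rw [hcardF, hcardK] at hle
    exact (Nat.pow_le_pow_iff_right (Nat.Prime.one_lt Fact.out)).mp hle
  have hcards : Fintype.card F = Fintype.card (GaloisField p n) := by
    rw [hcardF, hcardK, le_antisymm hjle (not_lt.mp hjn)]
  have hsurj : Function.Surjective (Subtype.val : F → GaloisField p n) :=
    ((Fintype.bijective_iff_injective_and_card _).mpr
      ⟨Subtype.val_injective, hcards⟩).surjective
  intro x
  obtain ⟨⟨y, hy⟩, rfl⟩ := hsurj x
  exact hy


theorem transSubgroup_eq (p n : ℕ) [Fact p.Prime] :
    transSubgroup p n = transSub (GaloisField p n) :=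
  Subgroup.closure_eq (transSub (GaloisField p n))

theorem mulSubgroup_eq (p n r : ℕ) [Fact p.Prime] :
    mulSubgroup p n r = mulSub (GaloisField p n) r :=
  Subgroup.closure_eq (mulSub (GaloisField p n) r)

theorem galSubgroup_eq (p n : ℕ) [Fact p.Prime] :
    galSubgroup p n = galSub (GaloisField p n) :=
  Subgroup.closure_eq (galSub (GaloisField p n))

/-- Let `p` be a prime, `n = p^a`, `q = p^n`, `r` a Zsigmondy
prime for `(p, n)`. In `G = JRV ≤ AΓL₁(q)` (inside `Sym(F_q)`), with `V` the
translations, `R` the multiplications of order dividing `r`, and `J` the field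
automorphisms: `C_V(R) = 1`, `N_G(R) = JR`, and `C_G(R) = R`. -/
theorem stmt_15 (p : ℕ) (hp : Fact p.Prime) (a : ℕ) (ha : 0 < a)
    (n : ℕ) (hn : n = p ^ a)
    (r : ℕ) (hr : r.Prime) (hrdvd : r ∣ p ^ n - 1)
    (hzsig : ∀ j : ℕ, 1 ≤ j → j < n → ¬ r ∣ p ^ j - 1) :
    Subgroup.centralizer ((mulSubgroup p n r : Subgroup _) : Set _) ⊓
        transSubgroup p n = ⊥ ∧
    Subgroup.normalizer ((mulSubgroup p n r : Subgroup _) : Set _) ⊓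
        (galSubgroup p n ⊔ mulSubgroup p n r ⊔ transSubgroup p n) =
      galSubgroup p n ⊔ mulSubgroup p n r ∧
    Subgroup.centralizer ((mulSubgroup p n r : Subgroup _) : Set _) ⊓
        (galSubgroup p n ⊔ mulSubgroup p n r ⊔ transSubgroup p n) =
      mulSubgroup p n r := by
  classical
  haveI : Fact r.Prime := ⟨hr⟩
  letI : Fintype (GaloisField p n) := Fintype.ofFinite _
  rw [transSubgroup_eq, mulSubgroup_eq, galSubgroup_eq, gal_sup_mul_sup_trans, gal_sup_mul]
  have hn0 : n ≠ 0 := by rw [hn]; exact pow_ne_zero a hp.out.pos.ne'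
  have hcardKu : Fintype.card (GaloisField p n)ˣ = p ^ n - 1 := by
    rw [Fintype.card_units, ← Nat.card_eq_fintype_card, GaloisField.card p n hn0]
  obtain ⟨u, hu⟩ := exists_prime_orderOf_dvd_card r (by rw [hcardKu]; exact hrdvd)
  have hc0 : (↑u : GaloisField p n) ≠ 0 := u.ne_zero
  have hcr : (↑u : GaloisField p n) ^ r = 1 := by
    have h1 : u ^ r = 1 := by rw [← hu]; exact pow_orderOf_eq_one u
    simpa using congrArg Units.val h1
  have hc1 : (↑u : GaloisField p n) ≠ 1 := by
    intro h
    have h1 : u = 1 := Units.ext h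
    rw [h1, orderOf_one] at hu
    exact hr.one_lt.ne hu
  have hmemc : Equiv.mulLeft₀ (↑u : GaloisField p n) hc0 ∈ mulSub (GaloisField p n) r :=
    ⟨↑u, hc0, hcr, rfl⟩
  refine ⟨?_, ?_, ?_⟩
  · -- C(R) ⊓ V = ⊥
    rw [eq_bot_iff]
    intro σ hσ
    rw [Subgroup.mem_inf] at hσ
    obtain ⟨hC, b, rfl⟩ := hσ
    have hcomm := Subgroup.mem_centralizer_iff.mp hC _ hmemc
    have h0 := Equiv.ext_iff.mp hcomm 0
    simp only [Equiv.Perm.mul_apply, Equiv.mulLeft₀_apply, Equiv.coe_addLeft, mul_zero,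
      add_zero] at h0
    -- h0 : ↑u * b = b
    have hb : b = 0 := by
      by_contra hb
      exact hc1 (mul_right_cancel₀ hb (by rw [h0, one_mul]))
    rw [hb]
    exact Subgroup.mem_bot.mpr (by ext x; simp)
  · -- N(R) ⊓ G = JR
    ext σ
    rw [Subgroup.mem_inf]
    constructor
    · rintro ⟨hN, τ, a', b, ha', har, hσ⟩
      have hconj : σ * Equiv.mulLeft₀ (↑u : GaloisField p n) hc0 * σ⁻¹ ∈
          mulSub (GaloisField p n) r := (Subgroup.mem_normalizer_iff.mp hN _).mp hmemc
      obtain ⟨d, hd, hdr, hconj_eq⟩ := hconj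
      have h0 := Equiv.ext_iff.mp hconj_eq.symm 0
      simp only [Equiv.Perm.mul_apply, Equiv.mulLeft₀_apply, mul_zero] at h0
      -- h0 : σ (↑u * σ⁻¹ 0) = 0
      have hz : τ (a' * σ⁻¹ 0) + b = 0 := by
        rw [← hσ]; exact σ.apply_symm_apply 0
      rw [hσ, show a' * (↑u * σ⁻¹ 0) = ↑u * (a' * σ⁻¹ 0) by ring, map_mul] at h0
      have hab : τ (a' * σ⁻¹ 0) = -b := eq_neg_of_add_eq_zero_left hz
      have hτu1 : τ ↑u ≠ 1 := fun h1 =>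
        hc1 (τ.injective (h1.trans (map_one τ).symm))
      have hb : b = 0 := by
        rw [hab] at h0
        have h2 : (1 - τ ↑u) * b = 0 := by linear_combination -h0
        rcases mul_eq_zero.mp h2 with h3 | h3
        · exact absurd (sub_eq_zero.mp h3).symm hτu1
        · exact h3
      exact ⟨τ, a', ha', har, fun x => by rw [hσ x, hb, add_zero]⟩
    · intro hσ
      refine ⟨Subgroup.mem_normalizer_iff.mpr fun h => ⟨fun hh => conj_mem_mulSub hσ hh,
        fun hh => ?_⟩, ?_⟩
      · have h2 := conj_mem_mulSub (Subgroup.inv_mem _ hσ) hh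
        have h3 : σ⁻¹ * (σ * h * σ⁻¹) * σ⁻¹⁻¹ = h := by group
        rwa [h3] at h2
      · obtain ⟨τ, a', ha', har, hσf⟩ := hσ
        exact ⟨τ, a', 0, ha', har, fun x => by rw [hσf x, add_zero]⟩
  · -- C(R) ⊓ G = R
    ext σ
    rw [Subgroup.mem_inf]
    constructor
    · rintro ⟨hC, τ, a', b, ha', har, hσ⟩
      have hcomm := Subgroup.mem_centralizer_iff.mp hC _ hmemc
      have h0 := Equiv.ext_iff.mp hcomm 0
      simp only [Equiv.Perm.mul_apply, Equiv.mulLeft₀_apply, mul_zero] at h0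
      rw [hσ 0] at h0
      simp only [mul_zero, map_zero, zero_add] at h0
      -- h0 : ↑u * b = b
      have hb : b = 0 := by
        by_contra hb
        exact hc1 (mul_right_cancel₀ hb (by rw [h0, one_mul]))
      have h1 := Equiv.ext_iff.mp hcomm 1
      simp only [Equiv.Perm.mul_apply, Equiv.mulLeft₀_apply] at h1
      rw [hσ (↑u * 1), hσ 1] at h1
      simp only [hb, add_zero, mul_one] at h1
      -- h1 : ↑u * τ a' = τ (a' * ↑u)
      have hτa' : τ a' ≠ 0 := fun hh => ha' (by simpa using congrArg τ.symm hh)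
      have hτu : τ ↑u = ↑u := by
        rw [map_mul, mul_comm (↑u : GaloisField p n) (τ a')] at h1
        exact (mul_left_cancel₀ hτa' h1).symm
      have hid := tau_eq_id ha hn hr hzsig τ u hu hτu
      refine ⟨a', ha', har, ?_⟩
      ext x
      rw [hσ x, hb, add_zero, hid (a' * x), Equiv.mulLeft₀_apply]
    · rintro ⟨e, he, her, rfl⟩
      refine ⟨Subgroup.mem_centralizer_iff.mpr ?_,
        ⟨RingEquiv.refl _, e, 0, he, her, fun x => by simp⟩⟩
      rintro h ⟨f, hf, hfr, rfl⟩
      ext x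
      simp only [Equiv.Perm.mul_apply, Equiv.mulLeft₀_apply]
      ring
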